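/- If a nonnegative random variable X has density f_X whose hazard rate r_X(x) = f_X(x)/(1 - F_X(x)) satisfies r_X(x) ≤ 1/x for all x > 0, then the function x ↦ 1 - F_X(1/x) is subadditive on (0,∞), i.e. X is InvSub. -/

import Mathlib

open MeasureTheory Set

private lemma aux_limit {a b C : ℝ} (hC : 0 ≤ C)
    (h : ∀ n : ℕ, a ≤ b + C / ((n : ℝ) + 1)) : a ≤ b := by
  by_contra hab
  push_neg at hab
  set ε := a - b with hε
  have hε0 : 0 < ε := by simp [hε]; linarith
  obtain ⟨n, hn⟩ := exists_nat_gt (C / ε)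
  have h1 := h n
  have hn1 : (0:ℝ) < (n:ℝ) + 1 := by positivity
  have : C / ((n:ℝ)+1) < ε := by
    rw [div_lt_iff₀ hn1]
    have : C < ε * n := by
      rw [div_lt_iff₀ hε0] at hn
      linarith [hn]
    nlinarith
  linarith


/-- If a nonnegative random variable has density `f` whose hazard rate
`f x / (1 - F x)` is at most `1/x` for all `x > 0`, then `x ↦ 1 - F (1/x)` is
subadditive on `(0,∞)`, i.e. `X` is InvSub. -/
theorem stmt2 (f : ℝ → ℝ) (hf : ∀ x, 0 ≤ f x) (hf0 : ∀ x ≤ (0 : ℝ), f x = 0)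
    (μ : Measure ℝ) (hμ : μ = volume.withDensity (fun x => ENNReal.ofReal (f x)))
    [IsProbabilityMeasure μ]
    (F : ℝ → ℝ) (hF : ∀ x, F x = (μ (Iic x)).toReal)
    (hhaz : ∀ x : ℝ, 0 < x → f x / (1 - F x) ≤ 1 / x) :
    ∀ x y : ℝ, 0 < x → 0 < y →
      1 - F (1 / (x + y)) ≤ (1 - F (1 / x)) + (1 - F (1 / y)) := by
  
  set G : ℝ → ℝ := fun u => (μ (Ioi u)).toReal with hG
  -- basic facts
  have hfin : ∀ s : Set ℝ, μ s ≠ ⊤ := fun s => measure_ne_top μ s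
  have hGnn : ∀ u, 0 ≤ G u := fun u => ENNReal.toReal_nonneg
  have hGF : ∀ u, 1 - F u = G u := by
    intro u
    have hsplit : μ (Iic u) + μ (Ioi u) = 1 := by
      rw [← measure_union (Iic_disjoint_Ioi le_rfl) measurableSet_Ioi, Iic_union_Ioi,
        measure_univ]
    have := congrArg ENNReal.toReal hsplit
    rw [ENNReal.toReal_add (hfin _) (hfin _)] at this
    simp at this
    rw [hF u]
    simp [hG]
    linarith
  have hG1 : ∀ u, G u ≤ 1 := by
    intro u
    have := hGF u
    have hFnn : 0 ≤ F u := by rw [hF]; exact ENNReal.toReal_nonneg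
    linarith
  have hGmono : ∀ s t : ℝ, s ≤ t → G t ≤ G s := by
    intro s t hst
    exact ENNReal.toReal_le_toReal (hfin _) (hfin _) |>.mpr (measure_mono (Ioi_subset_Ioi hst))
  have hatom : ∀ u : ℝ, μ {u} = 0 := by
    intro u
    rw [hμ]
    exact withDensity_absolutelyContinuous _ _ (Real.volume_singleton)
  have hdiff : ∀ s t : ℝ, s < t → G s - G t = (μ (Ioo s t)).toReal := by
    intro s t hst
    have h1 : μ (Ioi s) = μ (Ioc s t) + μ (Ioi t) := by
      rw [← measure_union (Ioc_disjoint_Ioi le_rfl) measurableSet_Ioi,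
        Ioc_union_Ioi_eq_Ioi hst.le]
    have h2 : μ (Ioc s t) = μ (Ioo s t) := by
      apply le_antisymm
      · calc μ (Ioc s t) ≤ μ (Ioo s t ∪ {t}) := measure_mono (by rw [Ioo_union_right hst])
          _ ≤ μ (Ioo s t) + μ {t} := measure_union_le _ _
          _ = μ (Ioo s t) := by rw [hatom, add_zero]
      · exact measure_mono Ioo_subset_Ioc_self
    rw [h2] at h1
    have := congrArg ENNReal.toReal h1
    rw [ENNReal.toReal_add (hfin _) (hfin _)] at this
    simp only [hG]
    linarith
  -- pointwise hazard bound
  have hfb : ∀ u : ℝ, 0 < u → 0 < G u → f u ≤ G u / u := by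
    intro u hu hGu
    have h := hhaz u hu
    rw [hGF u] at h
    rw [div_le_div_iff₀ hGu hu] at h
    rw [le_div_iff₀ hu]
    linarith
  -- one step estimate
  have hstep : ∀ s t : ℝ, 0 < s → s ≤ t → (∀ u ∈ Ioo s t, 0 < G u) →
      s * (s * G s - t * G t) ≤ (t - s)^2 := by
    intro s t hs hst hpos
    rcases eq_or_lt_of_le hst with rfl | hlt
    · simp
    have hbd : (μ (Ioo s t)).toReal ≤ (G s / s) * (t - s) := by
      rw [hμ, withDensity_apply _ measurableSet_Ioo]
      have hmono : (∫⁻ x in Ioo s t, ENNReal.ofReal (f x)) ≤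
          ∫⁻ _x in Ioo s t, ENNReal.ofReal (G s / s) := by
        apply setLIntegral_mono measurable_const
        intro x hx
        apply ENNReal.ofReal_le_ofReal
        calc f x ≤ G x / x := hfb x (hs.trans hx.1) (hpos x hx)
          _ ≤ G s / s := by
              apply div_le_div₀ (hGnn s) (hGmono s x hx.1.le) hs hx.1.le
      rw [setLIntegral_const, Real.volume_Ioo] at hmono
      calc (∫⁻ x in Ioo s t, ENNReal.ofReal (f x)).toReal
          ≤ (ENNReal.ofReal (G s / s) * ENNReal.ofReal (t - s)).toReal := by
            apply ENNReal.toReal_mono _ hmono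
            exact ENNReal.mul_ne_top ENNReal.ofReal_ne_top ENNReal.ofReal_ne_top
        _ = (G s / s) * (t - s) := by
            rw [ENNReal.toReal_mul, ENNReal.toReal_ofReal (by positivity),
              ENNReal.toReal_ofReal (by linarith)]
    have hkey : s * (G s - G t) ≤ (t - s) * G s := by
      have := hdiff s t hlt
      have h2 : G s - G t ≤ (G s / s) * (t - s) := by rw [this]; exact hbd
      have h3 : s * (G s - G t) ≤ s * ((G s / s) * (t - s)) :=
        mul_le_mul_of_nonneg_left h2 hs.le
      have h4 : s * ((G s / s) * (t - s)) = (t - s) * G s := by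
        field_simp
      linarith
    nlinarith [hG1 s, hGnn s, mul_le_mul_of_nonneg_left hkey (le_of_lt (hs.trans_le hst)),
      mul_nonneg (sq_nonneg (t - s)) (sub_nonneg.2 (hG1 s))]
  -- iterated estimate
  have hiter : ∀ n : ℕ, ∀ s t : ℝ, 0 < s → s ≤ t → (∀ u ∈ Ioo s t, 0 < G u) →
      ((n : ℝ) + 1) * (s * (s * G s - t * G t)) ≤ (t - s)^2 := by
    intro n
    induction n with
    | zero =>
      intro s t hs hst hpos
      simpa using hstep s t hs hst hpos
    | succ n ih =>
      intro s t hs hst hpos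
      push_cast
      set N : ℝ := (n : ℝ) + 1 with hN
      have hN1 : 1 ≤ N := by simp [hN]
      set m : ℝ := s + (t - s) / (N + 1) with hm
      have hd : 0 ≤ t - s := by linarith
      have hsm : s ≤ m := by
        simp only [hm]
        have : 0 ≤ (t - s) / (N + 1) := by positivity
        linarith
      have hmt : m ≤ t := by
        have hds : (t - s)/(N+1) ≤ t - s := div_le_self hd (by linarith)
        simp only [hm]
        linarith
      have hm0 : 0 < m := lt_of_lt_of_le hs hsm
      have hm1 : (N + 1) * (m - s) = t - s := by
        simp only [hm]
        field_simp
        ring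
      have hm2 : t - m = N * (m - s) := by
        have h := hm1
        nlinarith [h]
      have h1 : s * (s * G s - m * G m) ≤ (m - s)^2 :=
        hstep s m hs hsm (fun u hu => hpos u ⟨hu.1, lt_of_lt_of_le hu.2 hmt⟩)
      have h2 : N * (m * (m * G m - t * G t)) ≤ (t - m)^2 := by
        have := ih m t hm0 hmt (fun u hu => hpos u ⟨lt_of_le_of_lt hsm hu.1, hu.2⟩)
        simpa [hN] using this
      -- from h2 deduce m * (m*Gm - t*Gt) ≤ N * (m-s)^2
      have h3 : m * (m * G m - t * G t) ≤ N * (m - s)^2 := by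
        have hNpos : (0:ℝ) < N := by linarith
        rw [hm2] at h2
        nlinarith [h2, hNpos, sq_nonneg (m - s)]
      have h4 : s * (m * G m - t * G t) ≤ N * (m - s)^2 := by
        rcases le_or_gt (m * G m - t * G t) 0 with hc | hc
        · have : s * (m * G m - t * G t) ≤ 0 := mul_nonpos_of_nonneg_of_nonpos hs.le hc
          nlinarith [sq_nonneg (m - s), hN1]
        · calc s * (m * G m - t * G t) ≤ m * (m * G m - t * G t) :=
              mul_le_mul_of_nonneg_right hsm hc.le
            _ ≤ N * (m - s)^2 := h3
      have hts : (t - s)^2 = (N + 1)^2 * (m - s)^2 := by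
        rw [← hm1]; ring
      rw [hts]
      have hfin2 : s * (s * G s - t * G t) ≤ (N + 1) * (m - s)^2 := by nlinarith [h1, h4]
      calc (N + 1) * (s * (s * G s - t * G t)) ≤ (N + 1) * ((N + 1) * (m - s)^2) :=
            mul_le_mul_of_nonneg_left hfin2 (by linarith)
        _ = (N + 1)^2 * (m - s)^2 := by ring
  -- strict positivity of G on (0, ∞)
  have hIoi0 : μ (Ioi (0:ℝ)) = 1 := by
    have hIic0 : μ (Iic (0:ℝ)) = 0 := by
      rw [hμ, withDensity_apply _ measurableSet_Iic]
      calc (∫⁻ x in Iic (0:ℝ), ENNReal.ofReal (f x)) =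
          ∫⁻ x in Iic (0:ℝ), (0:ENNReal) :=
            setLIntegral_congr_fun measurableSet_Iic
              (fun x hx => by rw [hf0 x hx]; simp)
        _ = 0 := by simp
    have hsplit : μ (Iic 0) + μ (Ioi 0) = 1 := by
      rw [← measure_union (Iic_disjoint_Ioi le_rfl) measurableSet_Ioi, Iic_union_Ioi,
        measure_univ]
    rw [hIic0, zero_add] at hsplit
    exact hsplit
  have hpos : ∀ u : ℝ, 0 < u → 0 < G u := by
    by_contra hcon
    push_neg at hcon
    obtain ⟨u0, hu0, hGu0⟩ := hcon
    have hZu0 : μ (Ioi u0) = 0 := by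
      have : G u0 = 0 := le_antisymm hGu0 (hGnn u0)
      simpa [hG, ENNReal.toReal_eq_zero_iff, hfin (Ioi u0)] using this
    set Z : Set ℝ := {u : ℝ | 0 < u ∧ μ (Ioi u) = 0} with hZ
    have hZne : Z.Nonempty := ⟨u0, hu0, hZu0⟩
    have hZbd : BddBelow Z := ⟨0, fun z hz => hz.1.le⟩
    set T : ℝ := sInf Z with hT
    have hT0 : 0 ≤ T := le_csInf hZne (fun z hz => hz.1.le)
    have hTzero : μ (Ioi T) = 0 := by
      have hsub : Ioi T ⊆ ⋃ n : ℕ, Ioi (T + 1/((n:ℝ)+1)) := by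
        intro x hx
        obtain ⟨n, hn⟩ := exists_nat_one_div_lt (sub_pos.2 (show T < x from hx))
        exact mem_iUnion.2 ⟨n, by simp only [mem_Ioi]; linarith⟩
      have hz : ∀ n : ℕ, μ (Ioi (T + 1/((n:ℝ)+1))) = 0 := by
        intro n
        have h1 : T < T + 1/((n:ℝ)+1) := by
          have : (0:ℝ) < 1/((n:ℝ)+1) := by positivity
          linarith
        obtain ⟨z, hzZ, hzlt⟩ := exists_lt_of_csInf_lt hZne h1
        have : Ioi (T + 1/((n:ℝ)+1)) ⊆ Ioi z := Ioi_subset_Ioi hzlt.le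
        have := measure_mono (μ := μ) this
        rw [hzZ.2] at this
        exact le_antisymm this (zero_le)
      refine le_antisymm ?_ (zero_le)
      calc μ (Ioi T) ≤ μ (⋃ n : ℕ, Ioi (T + 1/((n:ℝ)+1))) := measure_mono hsub
        _ ≤ ∑' n : ℕ, μ (Ioi (T + 1/((n:ℝ)+1))) := measure_iUnion_le _
        _ = 0 := by simp only [hz, tsum_zero]
    have hTpos : 0 < T := by
      rcases hT0.lt_or_eq with h | h
      · exact h
      · exfalso
        rw [← h] at hTzero
        rw [hTzero] at hIoi0
        exact zero_ne_one hIoi0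
    have hGT : G T = 0 := by simp [hG, hTzero]
    have hintpos : ∀ u ∈ Ioo (T/2) T, 0 < G u := by
      intro u hu
      have hu0 : 0 < u := lt_trans (by linarith) hu.1
      by_contra hc
      push_neg at hc
      have : G u = 0 := le_antisymm hc (hGnn u)
      have hmu : μ (Ioi u) = 0 := by
        simpa [hG, ENNReal.toReal_eq_zero_iff, hfin (Ioi u)] using this
      have : T ≤ u := csInf_le hZbd ⟨hu0, hmu⟩
      linarith [hu.2]
    have hhalf : 0 < T/2 := by linarith
    have hle : T/2 ≤ T := by linarith
    have hfinal : (T/2) * ((T/2) * G (T/2)) ≤ 0 := by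
      apply aux_limit (C := (T - T/2)^2) (by positivity)
      intro n
      have := hiter n (T/2) T hhalf hle hintpos
      rw [hGT] at this
      rw [zero_add, le_div_iff₀ (by positivity : (0:ℝ) < (n:ℝ)+1)]
      calc (T/2) * ((T/2) * G (T/2)) * ((n:ℝ)+1)
          = ((n:ℝ)+1) * ((T/2) * ((T/2) * G (T/2) - T * 0)) := by ring
        _ ≤ (T - T/2)^2 := this
    have hGhalf : G (T/2) ≤ 0 := by
      by_contra hc
      push_neg at hc
      have : 0 < T/2 * (T/2 * G (T/2)) := mul_pos hhalf (mul_pos hhalf hc)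
      linarith
    have : G (T/2) = 0 := le_antisymm hGhalf (hGnn (T/2))
    have hmu : μ (Ioi (T/2)) = 0 := by
      simpa [hG, ENNReal.toReal_eq_zero_iff, hfin (Ioi (T/2))] using this
    have : T ≤ T/2 := csInf_le hZbd ⟨hhalf, hmu⟩
    linarith
  -- monotonicity of u * G u
  have hmono2 : ∀ s t : ℝ, 0 < s → s ≤ t → s * G s ≤ t * G t := by
    intro s t hs hst
    have h : s * (s * G s - t * G t) ≤ 0 := by
      have := aux_limit (a := s * (s * G s - t * G t)) (b := 0) (C := (t - s)^2)
        (sq_nonneg _) ?_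
      · exact this
      · intro n
        have := hiter n s t hs hst (fun u hu => hpos u (hs.trans hu.1))
        rw [zero_add, le_div_iff₀ (by positivity : (0:ℝ) < (n:ℝ)+1)]
        linarith [this]
    nlinarith [h, hs]
  -- conclusion
  intro x y hx hy
  have hxy : 0 < x + y := by linarith
  rw [hGF, hGF, hGF]
  have hone : (0:ℝ) < 1 / (x + y) := by positivity
  have h1 : (1/(x+y)) * G (1/(x+y)) ≤ (1/x) * G (1/x) :=
    hmono2 _ _ hone (one_div_le_one_div_of_le hx (by linarith))
  have h2 : (1/(x+y)) * G (1/(x+y)) ≤ (1/y) * G (1/y) :=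
    hmono2 _ _ hone (one_div_le_one_div_of_le hy (by linarith))
  have a1 : x * ((1/(x+y)) * G (1/(x+y))) ≤ G (1/x) := by
    have := mul_le_mul_of_nonneg_left h1 hx.le
    have hxx : x * ((1/x) * G (1/x)) = G (1/x) := by
      rw [← mul_assoc, mul_one_div_cancel hx.ne', one_mul]
    linarith
  have a2 : y * ((1/(x+y)) * G (1/(x+y))) ≤ G (1/y) := by
    have := mul_le_mul_of_nonneg_left h2 hy.le
    have hyy : y * ((1/y) * G (1/y)) = G (1/y) := by
      rw [← mul_assoc, mul_one_div_cancel hy.ne', one_mul]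
    linarith
  have e : x * ((1/(x+y)) * G (1/(x+y))) + y * ((1/(x+y)) * G (1/(x+y))) = G (1/(x+y)) := by
    rw [← add_mul, ← mul_assoc, mul_one_div_cancel hxy.ne', one_mul]
  linarith
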